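/- Let u : ℝᵈ → ℝ be continuous ℤᵈ-periodic and S continuous, coercive, diagonal-periodic, locally semiconcave, C¹ and ferromagnetic. For y ∈ ℝᵈ: there exists a unique x with T⁻[u](y) = u(x) + S(x,y) if and only if T⁻[u] is differentiable at y. -/

import Mathlib

open Filter Topology

/-- The discrete backward Lax-Oleinik operator. -/
noncomputable def Tminus {d : ℕ} (S : (Fin d → ℝ) → (Fin d → ℝ) → ℝ)
    (u : (Fin d → ℝ) → ℝ) : (Fin d → ℝ) → ℝ :=
  fun y => ⨅ x, (u x + S x y)

/-- The discrete forward Lax-Oleinik operator. -/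
noncomputable def Tplus {d : ℕ} (S : (Fin d → ℝ) → (Fin d → ℝ) → ℝ)
    (u : (Fin d → ℝ) → ℝ) : (Fin d → ℝ) → ℝ :=
  fun x => ⨆ y, (u y - S x y)

/-- ℤᵈ-periodicity. -/
def ZPeriodic {d : ℕ} (u : (Fin d → ℝ) → ℝ) : Prop :=
  ∀ (m : Fin d → ℤ) (x : Fin d → ℝ), u (x + fun i => (m i : ℝ)) = u x

/-- Coercivity: S(x,y) → +∞ as ‖x−y‖ → ∞. -/
def Coercive {d : ℕ} (S : (Fin d → ℝ) → (Fin d → ℝ) → ℝ) : Prop :=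
  ∀ M : ℝ, ∃ R : ℝ, ∀ x y : Fin d → ℝ, R ≤ ‖x - y‖ → M ≤ S x y

/-- Diagonal periodicity: S(x+m, y+m) = S(x,y) for m ∈ ℤᵈ. -/
def DiagPeriodic {d : ℕ} (S : (Fin d → ℝ) → (Fin d → ℝ) → ℝ) : Prop :=
  ∀ (m : Fin d → ℤ) (x y : Fin d → ℝ),
    S (x + fun i => (m i : ℝ)) (y + fun i => (m i : ℝ)) = S x y

/-- Semiconcavity with a linear modulus. -/
def Semiconcave {d : ℕ} (v : (Fin d → ℝ) → ℝ) : Prop :=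
  ∃ C : ℝ, 0 ≤ C ∧ ∀ x y : Fin d → ℝ, ∀ θ : ℝ, θ ∈ Set.Icc (0:ℝ) 1 →
    θ * v x + (1 - θ) * v y - v (θ • x + (1 - θ) • y) ≤
      C / 2 * θ * (1 - θ) * ‖x - y‖ ^ 2

/-- Local semiconcavity (with linear modulus) on a normed space. -/
def LocallySemiconcave {E : Type*} [NormedAddCommGroup E] [NormedSpace ℝ E]
    (f : E → ℝ) : Prop :=
  ∀ x : E, ∃ U ∈ 𝓝 x, Convex ℝ U ∧ ∃ C : ℝ, 0 ≤ C ∧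
    ∀ y ∈ U, ∀ z ∈ U, ∀ θ : ℝ, θ ∈ Set.Icc (0:ℝ) 1 →
      θ * f y + (1 - θ) * f z - f (θ • y + (1 - θ) • z) ≤
        C / 2 * θ * (1 - θ) * ‖y - z‖ ^ 2

/-- The ferromagnetic property: S is C¹ and the partial-derivative maps
`y ↦ ∂₁S(x,y)` and `x ↦ ∂₂S(x,y)` are homeomorphisms. -/
def Ferromagnetic {d : ℕ} (S : (Fin d → ℝ) → (Fin d → ℝ) → ℝ) : Prop :=
  ContDiff ℝ 1 (fun p : (Fin d → ℝ) × (Fin d → ℝ) => S p.1 p.2) ∧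
  (∀ x : Fin d → ℝ, ∃ h : (Fin d → ℝ) ≃ₜ ((Fin d → ℝ) →L[ℝ] ℝ),
      ∀ y, h y = fderiv ℝ (fun t => S t y) x) ∧
  (∀ y : Fin d → ℝ, ∃ h : (Fin d → ℝ) ≃ₜ ((Fin d → ℝ) →L[ℝ] ℝ),
      ∀ x, h x = fderiv ℝ (fun t => S x t) y)


section AuxLemmas

variable {d : ℕ}

private lemma u_lb {u : (Fin d → ℝ) → ℝ} (hu : Continuous u) (hup : ZPeriodic u) :
    ∃ m : ℝ, ∀ x, m ≤ u x := by
  obtain ⟨z, hz, hzmin⟩ := (isCompact_Icc (a := (0 : Fin d → ℝ)) (b := 1)).exists_isMinOn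
    (Set.nonempty_Icc.mpr zero_le_one) hu.continuousOn
  refine ⟨u z, fun x => ?_⟩
  have hx : u x = u (fun i => Int.fract (x i)) := by
    have h := hup (fun i => ⌊x i⌋) (fun i => Int.fract (x i))
    rw [← h]; congr 1; funext i
    simp [Int.fract_add_floor]
  rw [hx]
  exact isMinOn_iff.mp hzmin _
    ⟨fun i => Int.fract_nonneg _, fun i => (Int.fract_lt_one _).le⟩

private lemma exists_min {S : (Fin d → ℝ) → (Fin d → ℝ) → ℝ}
    (hS : Continuous fun p : (Fin d → ℝ) × (Fin d → ℝ) => S p.1 p.2)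
    (hco : Coercive S) {u : (Fin d → ℝ) → ℝ} {m : ℝ} (hm : ∀ x, m ≤ u x)
    (hu : Continuous u) (y : Fin d → ℝ) :
    ∃ x₀, ∀ x, u x₀ + S x₀ y ≤ u x + S x y := by
  obtain ⟨R, hR⟩ := hco (u 0 + S 0 y - m)
  have hf : Continuous fun x : Fin d → ℝ => u x + S x y :=
    hu.add (hS.comp (continuous_id.prodMk continuous_const))
  refine hf.exists_forall_le' 0 ?_
  rw [Filter.eventually_iff, Filter.mem_cocompact]
  refine ⟨Metric.closedBall y R, isCompact_closedBall y R, fun x hx => ?_⟩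
  simp only [Set.mem_compl_iff, Metric.mem_closedBall, not_le, dist_eq_norm] at hx
  have h1 := hR x y hx.le
  have h2 := hm x
  simp only [Set.mem_setOf_eq]
  linarith

/-- The second partial derivative map of `S`. -/
private noncomputable def D2 (S : (Fin d → ℝ) → (Fin d → ℝ) → ℝ) (x t : Fin d → ℝ) :
    (Fin d → ℝ) →L[ℝ] ℝ :=
  (fderiv ℝ (fun p : (Fin d → ℝ) × (Fin d → ℝ) => S p.1 p.2) (x, t)).comp
    ((0 : (Fin d → ℝ) →L[ℝ] (Fin d → ℝ)).prod (ContinuousLinearMap.id ℝ (Fin d → ℝ)))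

private lemma hasFDerivAt_slice {S : (Fin d → ℝ) → (Fin d → ℝ) → ℝ}
    (hC1 : ContDiff ℝ 1 fun p : (Fin d → ℝ) × (Fin d → ℝ) => S p.1 p.2) (x t : Fin d → ℝ) :
    HasFDerivAt (fun s => S x s) (D2 S x t) t := by
  have h1 := (hC1.differentiable one_ne_zero (x, t)).hasFDerivAt
  have h2 : HasFDerivAt (fun s : Fin d → ℝ => ((x, s) : _ × _))
      ((0 : (Fin d → ℝ) →L[ℝ] (Fin d → ℝ)).prod (ContinuousLinearMap.id ℝ (Fin d → ℝ))) t :=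
    (hasFDerivAt_const x t).prodMk (hasFDerivAt_id t)
  exact h1.comp t h2

private lemma continuous_D2 {S : (Fin d → ℝ) → (Fin d → ℝ) → ℝ}
    (hC1 : ContDiff ℝ 1 fun p : (Fin d → ℝ) × (Fin d → ℝ) => S p.1 p.2) :
    Continuous fun q : (Fin d → ℝ) × (Fin d → ℝ) => D2 S q.1 q.2 :=
  (hC1.continuous_fderiv one_ne_zero).clm_comp continuous_const

end AuxLemmas

/-- T⁻[u] is differentiable at y iff the minimizer in T⁻[u](y) is unique. -/
theorem unique_min_iff_differentiable {d : ℕ} (S : (Fin d → ℝ) → (Fin d → ℝ) → ℝ)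
    (hS : Continuous fun p : (Fin d → ℝ) × (Fin d → ℝ) => S p.1 p.2)
    (hco : Coercive S) (hdp : DiagPeriodic S)
    (hlsc : LocallySemiconcave fun p : (Fin d → ℝ) × (Fin d → ℝ) => S p.1 p.2)
    (hfer : Ferromagnetic S)
    (u : (Fin d → ℝ) → ℝ) (hu : Continuous u) (hup : ZPeriodic u)
    (y : Fin d → ℝ) :
    (∃! x : Fin d → ℝ, Tminus S u y = u x + S x y) ↔
      DifferentiableAt ℝ (Tminus S u) y := by
  obtain ⟨hC1, -, hferm⟩ := hfer
  obtain ⟨m, hm⟩ := u_lb hu hup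
  have hmin : ∀ t : Fin d → ℝ, ∃ x₀, ∀ x, u x₀ + S x₀ t ≤ u x + S x t :=
    fun t => exists_min hS hco hm hu t
  have hbdd : ∀ t : Fin d → ℝ, BddBelow (Set.range fun x => u x + S x t) := by
    intro t; obtain ⟨x₀, h⟩ := hmin t
    exact ⟨u x₀ + S x₀ t, by rintro r ⟨z, rfl⟩; exact h z⟩
  have hTle : ∀ t x : Fin d → ℝ, Tminus S u t ≤ u x + S x t := fun t x => ciInf_le (hbdd t) x
  have hTeq : ∀ (t x₀ : Fin d → ℝ), (∀ x, u x₀ + S x₀ t ≤ u x + S x t) →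
      Tminus S u t = u x₀ + S x₀ t :=
    fun t x₀ h => le_antisymm (hTle t x₀) (le_ciInf h)
  constructor
  · rintro ⟨x₀, hx₀, huniq⟩
    set p := D2 S x₀ y with hp
    refine HasFDerivAt.differentiableAt (f' := p) ?_
    rw [hasFDerivAt_iff_isLittleO, Asymptotics.isLittleO_iff]
    intro ε hε
    -- continuity of the partial derivative at (x₀, y)
    obtain ⟨η, hη, hball⟩ := Metric.continuousAt_iff.mp (continuous_D2 hC1).continuousAt ε hε
    -- mean value estimate
    have hMVT : ∀ x : Fin d → ℝ, dist x x₀ < η → ∀ t : Fin d → ℝ, dist t y < η →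
        |S x t - S x y - p (t - y)| ≤ ε * ‖t - y‖ := by
      intro x hx t ht
      have hdifff : ∀ z ∈ Metric.ball y η, DifferentiableAt ℝ (fun s => S x s - p s) z :=
        fun z _ => ((hasFDerivAt_slice hC1 x z).sub p.hasFDerivAt).differentiableAt
      have hbound : ∀ z ∈ Metric.ball y η, ‖fderiv ℝ (fun s => S x s - p s) z‖ ≤ ε := by
        intro z hz
        rw [HasFDerivAt.fderiv (f := fun s => S x s - p s) ((hasFDerivAt_slice hC1 x z).sub p.hasFDerivAt)]
        have hd : dist (x, z) (x₀, y) < η := by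
          rw [Prod.dist_eq]; exact max_lt hx (Metric.mem_ball.mp hz)
        have := hball hd
        rw [dist_eq_norm] at this
        exact this.le
      have hres := (convex_ball y η).norm_image_sub_le_of_norm_fderiv_le hdifff hbound
        (Metric.mem_ball_self hη) (Metric.mem_ball.mpr ht)
      calc |S x t - S x y - p (t - y)| = ‖(S x t - p t) - (S x y - p y)‖ := by
            rw [Real.norm_eq_abs]; congr 1; rw [map_sub]; ring
        _ ≤ ε * ‖t - y‖ := hres
    -- bound on the value function near y
    obtain ⟨tV, htV, htVmax⟩ := (isCompact_closedBall y 1).exists_isMaxOn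
      ⟨y, Metric.mem_closedBall_self zero_le_one⟩
      (continuous_const.add (hS.comp (continuous_const.prodMk continuous_id))).continuousOn
      (f := fun t => u x₀ + S x₀ t)
    set V := u x₀ + S x₀ tV with hV
    have hVle : ∀ t ∈ Metric.closedBall y 1, Tminus S u t ≤ V :=
      fun t ht => le_trans (hTle t x₀) (isMaxOn_iff.mp htVmax t ht)
    obtain ⟨R₀, hR₀⟩ := hco (V + 1 - m)
    -- minimizers near y stay within R₀ of the base point
    have hloc : ∀ t ∈ Metric.closedBall y 1, ∀ xt : Fin d → ℝ,
        (∀ x, u xt + S xt t ≤ u x + S x t) → ‖xt - t‖ < R₀ := by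
      intro t ht xt hxt
      by_contra hcon
      push_neg at hcon
      have h1 := hR₀ xt t hcon
      have h2 := hm xt
      have h3 := hTeq t xt hxt
      have h4 := hVle t ht
      rw [h3] at h4
      linarith
    -- separation constant for the unique minimizer
    have hKc : ∃ c > 0, ∀ x : Fin d → ℝ, dist x y ≤ R₀ + 1 → η ≤ dist x x₀ →
        Tminus S u y + c ≤ u x + S x y := by
      rcases (Metric.closedBall y (R₀ + 1) \ Metric.ball x₀ η).eq_empty_or_nonempty with hK | hK
      · refine ⟨1, one_pos, fun x h1 h2 => absurd ?_
          (Set.eq_empty_iff_forall_notMem.mp hK x)⟩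
        exact ⟨Metric.mem_closedBall.mpr h1, fun hb => absurd (Metric.mem_ball.mp hb)
          (not_lt.mpr h2)⟩
      · obtain ⟨x₁, hx₁K, hx₁min⟩ :=
          ((isCompact_closedBall y (R₀ + 1)).diff Metric.isOpen_ball).exists_isMinOn hK
            (hu.add (hS.comp (continuous_id.prodMk continuous_const))).continuousOn
            (f := fun x => u x + S x y)
        have hne : x₁ ≠ x₀ := by
          intro hcontra
          exact hx₁K.2 (by rw [hcontra]; exact Metric.mem_ball_self hη)
        have hgt : Tminus S u y < u x₁ + S x₁ y :=
          lt_of_le_of_ne (hTle y x₁) (fun he => hne (huniq x₁ he))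
        refine ⟨(u x₁ + S x₁ y) - Tminus S u y, by linarith, fun x h1 h2 => ?_⟩
        have hxK : x ∈ Metric.closedBall y (R₀ + 1) \ Metric.ball x₀ η :=
          ⟨Metric.mem_closedBall.mpr h1, fun hb => absurd (Metric.mem_ball.mp hb)
            (not_lt.mpr h2)⟩
        have := isMinOn_iff.mp hx₁min x hxK
        linarith
    obtain ⟨c, hc, hcK⟩ := hKc
    -- uniform continuity on a compact product
    have hUC := ((isCompact_closedBall y (R₀ + 1)).prod
      (isCompact_closedBall y 1)).uniformContinuousOn_of_continuous hS.continuousOn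
    obtain ⟨δ₃, hδ₃, hδ₃'⟩ := Metric.uniformContinuousOn_iff.mp hUC (c / 3) (by linarith)
    -- continuity of t ↦ u x₀ + S x₀ t at y
    have hcont : ContinuousAt (fun t : Fin d → ℝ => u x₀ + S x₀ t) y :=
      (continuous_const.add (hS.comp (continuous_const.prodMk continuous_id))).continuousAt
    obtain ⟨δ₄, hδ₄, hδ₄'⟩ := Metric.continuousAt_iff.mp hcont (c / 3) (by linarith)
    rw [Metric.eventually_nhds_iff]
    refine ⟨min (min 1 η) (min δ₃ δ₄), lt_min (lt_min one_pos hη) (lt_min hδ₃ hδ₄),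
      fun t ht => ?_⟩
    have ht1 : dist t y < 1 := ht.trans_le ((min_le_left _ _).trans (min_le_left _ _))
    have htη : dist t y < η := ht.trans_le ((min_le_left _ _).trans (min_le_right _ _))
    have ht3 : dist t y < δ₃ := ht.trans_le ((min_le_right _ _).trans (min_le_left _ _))
    have ht4 : dist t y < δ₄ := ht.trans_le ((min_le_right _ _).trans (min_le_right _ _))
    obtain ⟨xt, hxt⟩ := hmin t
    have heqt := hTeq t xt hxt
    have htcb : t ∈ Metric.closedBall y 1 := Metric.mem_closedBall.mpr ht1.le
    have hxtR : ‖xt - t‖ < R₀ := hloc t htcb xt hxt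
    have hxty : dist xt y ≤ R₀ + 1 := by
      have htri := dist_triangle xt t y
      have hxtd : dist xt t < R₀ := by rwa [dist_eq_norm]
      linarith
    have hxtx₀ : dist xt x₀ < η := by
      by_contra hcon
      push_neg at hcon
      have h1 := hcK xt hxty hcon
      have h2 : dist (S xt t) (S xt y) < c / 3 := by
        have hpair := hδ₃' (xt, t) ⟨Metric.mem_closedBall.mpr hxty, htcb⟩ (xt, y)
          ⟨Metric.mem_closedBall.mpr hxty, Metric.mem_closedBall_self zero_le_one⟩
          (by rw [Prod.dist_eq]; exact max_lt (by simpa using hδ₃) ht3)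
        exact hpair
      have h3 := hδ₄' ht4
      rw [Real.dist_eq] at h2 h3
      have h2' := abs_lt.mp h2
      have h3' := abs_lt.mp h3
      have h4 := hTle t x₀
      linarith [h2'.1, h2'.2, h3'.2]
    have hub := hMVT x₀ (by rw [dist_self]; exact hη) t htη
    have hlb := hMVT xt hxtx₀ t htη
    rw [Real.norm_eq_abs, abs_le]
    have hub' := abs_le.mp hub
    have hlb' := abs_le.mp hlb
    have h1 := hTle y xt
    have h2 := hTle t x₀
    constructor
    · linarith [hlb'.1]
    · linarith [hub'.2]
  · intro hdiff
    obtain ⟨x₀, h₀⟩ := hmin y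
    refine ⟨x₀, hTeq y x₀ h₀, fun a ha => ?_⟩
    obtain ⟨h, hh⟩ := hferm y
    have key : ∀ b : Fin d → ℝ, Tminus S u y = u b + S b y →
        D2 S b y = fderiv ℝ (Tminus S u) y := by
      intro b hb
      have hloc : IsLocalMin (fun t => u b + S b t - Tminus S u t) y := by
        refine Filter.Eventually.of_forall fun t => ?_
        have h1 := hTle t b
        simp only
        rw [hb]
        linarith
      have hgd : HasFDerivAt (fun t => u b + S b t - Tminus S u t)
          (D2 S b y - fderiv ℝ (Tminus S u) y) y :=
        ((hasFDerivAt_slice hC1 b y).const_add (u b)).sub hdiff.hasFDerivAt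
      have h0 : D2 S b y - fderiv ℝ (Tminus S u) y = 0 := by
        rw [← hgd.fderiv]; exact hloc.fderiv_eq_zero
      exact sub_eq_zero.mp h0
    have hha : h a = h x₀ := by
      rw [hh a, hh x₀, (hasFDerivAt_slice hC1 a y).fderiv, (hasFDerivAt_slice hC1 x₀ y).fderiv,
        key a ha, key x₀ (hTeq y x₀ h₀)]
    exact h.injective hha
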